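/- Let h and h′ be two positive-definite Hermitian inner products on 𝔤^{1,0} such that h(𝔥^{1,0}, 𝔍^{1,0}) = 0 = h′(𝔥^{1,0}, 𝔍^{1,0}) and such that both are diagonal on 𝔥^{1,0} with respect to the frame {Z_1,…,Z_r}, i.e. h(Z_i, Z_j) = A_i·δ_{ij} and h′(Z_i, Z_j) = A′_i·δ_{ij} with A_i, A′_i > 0 (the restrictions to 𝔍^{1,0} are arbitrary). Then the associated Bismut-Ricci forms agree on mixed pairs: ρ_B(ω)(X,Y) = ρ_B(ω′)(X,Y) for every X ∈ 𝔤^{1,0} and Y ∈ 𝔤^{0,1}. That is, in this setting the (1,1)-component of the Bismut-Ricci form does not depend on the metric. -/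

import Mathlib

open Complex

private lemma aux_lie_sum {L : Type*} [LieRing L] {ι : Type*} (t : Finset ι) (x : L) (f : ι → L) :
    ⁅x, ∑ i ∈ t, f i⁆ = ∑ i ∈ t, ⁅x, f i⁆ := by
  induction t using Finset.cons_induction with
  | empty => simp
  | cons a t ha ih => simp [Finset.sum_cons, ih]

private lemma aux_sum_lie {L : Type*} [LieRing L] {ι : Type*} (t : Finset ι) (x : L) (f : ι → L) :
    ⁅∑ i ∈ t, f i, x⁆ = ∑ i ∈ t, ⁅f i, x⁆ := by
  induction t using Finset.cons_induction with
  | empty => simp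
  | cons a t ha ih => simp [Finset.sum_cons, ih]

private lemma aux_two_sided {n : ℕ} (g gi : Fin n → Fin n → ℂ)
    (h : ∀ a b, ∑ c, g a c * gi c b = if a = b then 1 else 0) :
    ∀ a b, ∑ c, gi a c * g c b = if a = b then 1 else 0 := by
  have hm : (Matrix.of g) * (Matrix.of gi) = 1 := by
    ext a b; simpa [Matrix.mul_apply, Matrix.one_apply] using h a b
  have hm2 : (Matrix.of gi) * (Matrix.of g) = 1 := mul_eq_one_comm.mp hm
  intro a b
  have h3 : ((Matrix.of gi) * (Matrix.of g)) a b = (1 : Matrix (Fin n) (Fin n) ℂ) a b := by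
    rw [hm2]
  simpa [Matrix.mul_apply, Matrix.one_apply] using h3

private lemma aux_conj_inv {n : ℕ} (g gi : Fin n → Fin n → ℂ)
    (hsym : ∀ a b, (starRingEnd ℂ) (g a b) = g b a)
    (h : ∀ a b, ∑ c, g a c * gi c b = if a = b then 1 else 0)
    (h2 : ∀ a b, ∑ c, gi a c * g c b = if a = b then 1 else 0) :
    ∀ a b, (starRingEnd ℂ) (gi a b) = gi b a := by
  set H : Fin n → Fin n → ℂ := fun a b => (starRingEnd ℂ) (gi b a) with hH
  have hGH : (Matrix.of g) * (Matrix.of H) = 1 := by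
    ext a b
    have e1 : ∑ c, g a c * H c b = (starRingEnd ℂ) (∑ c, gi b c * g c a) := by
      rw [map_sum]
      apply Finset.sum_congr rfl
      intro c _
      rw [map_mul, hH]
      simp only []
      rw [← hsym c a]
      ring
    have e2 : ∑ c, g a c * H c b = if a = b then 1 else 0 := by
      rw [e1, h2 b a]
      by_cases hab : a = b <;> simp [hab]
      · intro hba; exact hab hba.symm
    simpa [Matrix.mul_apply, Matrix.one_apply] using e2
  have hGGi : (Matrix.of g) * (Matrix.of gi) = 1 := by
    ext a b; simpa [Matrix.mul_apply, Matrix.one_apply] using h a b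
  have hfin : Matrix.of H = Matrix.of gi := by
    calc Matrix.of H = 1 * Matrix.of H := (one_mul _).symm
    _ = ((Matrix.of gi) * (Matrix.of g)) * Matrix.of H := by
        rw [mul_eq_one_comm.mp hGGi]
    _ = (Matrix.of gi) * ((Matrix.of g) * Matrix.of H) := by rw [Matrix.mul_assoc]
    _ = Matrix.of gi := by rw [hGH, Matrix.mul_one]
  intro a b
  have := congrFun (congrFun (congrArg (fun M => (M : Matrix (Fin n) (Fin n) ℂ)) hfin) b) a
  simpa [hH] using this

private lemma aux_uniq {M : Type*} [AddCommGroup M] [Module ℂ M] {n : ℕ} {v : Fin n → M}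
    (h : LinearIndependent ℂ v) (c d : Fin n → ℂ)
    (he : ∑ i, c i • v i = ∑ i, d i • v i) : c = d := by
  have h0 : ∑ i, (c i - d i) • v i = 0 := by
    simp only [sub_smul, Finset.sum_sub_distrib, he, sub_self]
  funext i
  have := Fintype.linearIndependent_iff.mp h (fun i => c i - d i) h0 i
  exact sub_eq_zero.mp this

private lemma aux_trace {M : Type*} [AddCommGroup M] [Module ℂ M] {n : ℕ}
    (Xf Xf' : Fin n → M)
    (hind' : LinearIndependent ℂ Xf')
    (P Q : Fin n → Fin n → ℂ)
    (hP : ∀ a, Xf' a = ∑ b, P a b • Xf b) (hQ : ∀ a, Xf a = ∑ b, Q a b • Xf' b)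
    (T : M →ₗ[ℂ] M) (t t' : Fin n → Fin n → ℂ)
    (ht : ∀ a, T (Xf a) = ∑ c, t a c • Xf c) (ht' : ∀ a, T (Xf' a) = ∑ c, t' a c • Xf' c) :
    ∑ a, t' a a = ∑ a, t a a := by
  have hPQ : ∀ a c, ∑ b, P a b * Q b c = if a = c then 1 else 0 := by
    intro a c
    have e : ∑ m, (∑ b, P a b * Q b m) • Xf' m = ∑ m, (if a = m then (1:ℂ) else 0) • Xf' m := by
      have lhs : ∑ m, (∑ b, P a b * Q b m) • Xf' m = Xf' a := by
        simp only [Finset.sum_smul, mul_smul]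
        rw [Finset.sum_comm]
        calc ∑ b, ∑ m, P a b • Q b m • Xf' m = ∑ b, P a b • Xf b := by
              apply Finset.sum_congr rfl; intro b _
              rw [← Finset.smul_sum, ← hQ]
          _ = Xf' a := (hP a).symm
      rw [lhs]
      simp
    have := congrFun (aux_uniq hind' _ _ e) c
    simpa using this
  have hQP : ∀ a c, ∑ b, Q a b * P b c = if a = c then 1 else 0 := aux_two_sided P Q hPQ
  have hrel : ∀ a m, t' a m = ∑ c, (∑ b, P a b * t b c) * Q c m := by
    intro a m
    have e : ∑ m, t' a m • Xf' m = ∑ m, (∑ c, (∑ b, P a b * t b c) * Q c m) • Xf' m := by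
      have l1 : ∑ m, t' a m • Xf' m = T (Xf' a) := (ht' a).symm
      have l2 : T (Xf' a) = ∑ b, P a b • T (Xf b) := by
        rw [hP a, map_sum]
        apply Finset.sum_congr rfl; intro b _; rw [map_smul]
      have l3 : ∑ b, P a b • T (Xf b) = ∑ c, (∑ b, P a b * t b c) • Xf c := by
        simp only [ht, Finset.smul_sum, Finset.sum_smul, mul_smul]
        rw [Finset.sum_comm]
      have l4 : ∑ c, (∑ b, P a b * t b c) • Xf c
          = ∑ m, (∑ c, (∑ b, P a b * t b c) * Q c m) • Xf' m := by
        simp only [hQ, Finset.smul_sum, Finset.sum_smul, mul_smul]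
        rw [Finset.sum_comm]
      rw [l1, l2, l3, l4]
    exact congrFun (aux_uniq hind' _ _ e) m
  have rearr : ∀ f : Fin n → Fin n → Fin n → ℂ,
      ∑ a, ∑ c, ∑ b, f a c b = ∑ b, ∑ c, ∑ a, f a c b := by
    intro f
    calc ∑ a, ∑ c, ∑ b, f a c b = ∑ c, ∑ a, ∑ b, f a c b := Finset.sum_comm
      _ = ∑ c, ∑ b, ∑ a, f a c b := Finset.sum_congr rfl (fun c _ => Finset.sum_comm)
      _ = ∑ b, ∑ c, ∑ a, f a c b := Finset.sum_comm
  calc ∑ a, t' a a = ∑ a, ∑ c, ∑ b, (P a b * t b c * Q c a) := by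
        apply Finset.sum_congr rfl; intro a _
        rw [hrel a a]
        apply Finset.sum_congr rfl; intro c _
        rw [Finset.sum_mul]
    _ = ∑ b, ∑ c, ∑ a, (P a b * t b c * Q c a) := rearr _
    _ = ∑ b, ∑ c, t b c * (∑ a, Q c a * P a b) := by
        apply Finset.sum_congr rfl; intro b _
        apply Finset.sum_congr rfl; intro c _
        rw [Finset.mul_sum]
        apply Finset.sum_congr rfl; intro a _
        ring
    _ = ∑ b, t b b := by
        apply Finset.sum_congr rfl; intro b _
        simp [hQP]
/-- In the semidirect-product setting `𝔤 = 𝔥 ⋉ 𝔍` satisfying (i)–(iv),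
let `h` and `h′` be two positive-definite Hermitian inner products on `𝔤^{1,0}` with
`h(𝔥^{1,0}, 𝔍^{1,0}) = 0 = h′(𝔥^{1,0}, 𝔍^{1,0})`, both diagonal on `𝔥^{1,0}` with respect
to `{Z_1,…,Z_r}` (with positive diagonal entries `A_i`, `A′_i`), and with arbitrary
restrictions to `𝔍^{1,0}`. Then the associated Bismut-Ricci forms agree on mixed pairs:
`ρ_B(ω)(X,Y) = ρ_B(ω′)(X,Y)` for all `X ∈ 𝔤^{1,0}` and `Y ∈ 𝔤^{0,1}`. -/
theorem stmt_16 (r s : ℕ) (hr : 1 ≤ r) (hs : 1 ≤ s)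
    (L : Type*) [LieRing L] [LieAlgebra ℂ L]
    (bas : Module.Basis ((Fin r ⊕ Fin r) ⊕ (Fin s ⊕ Fin s)) ℂ L)
    (Z Zb : Fin r → L) (W Wb : Fin s → L)
    (hZ : ∀ k, Z k = bas (Sum.inl (Sum.inl k)))
    (hZb : ∀ k, Zb k = bas (Sum.inl (Sum.inr k)))
    (hW : ∀ a, W a = bas (Sum.inr (Sum.inl a)))
    (hWb : ∀ a, Wb a = bas (Sum.inr (Sum.inr a)))
    -- (i) the structure of 𝔥
    (hZZb : ∀ k l, ⁅Z k, Zb l⁆ = if k = l then (-(I / 2)) • (Z k + Zb k) else 0)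
    (hZZ : ∀ k l, ⁅Z k, Z l⁆ = 0)
    (hZbZb : ∀ k l, ⁅Zb k, Zb l⁆ = 0)
    -- (ii) 𝔍 is an abelian ideal
    (hJabel : ∀ x ∈ Submodule.span ℂ (Set.range W ∪ Set.range Wb),
      ∀ y ∈ Submodule.span ℂ (Set.range W ∪ Set.range Wb), ⁅x, y⁆ = (0 : L))
    (hJideal : ∀ x : L, ∀ y ∈ Submodule.span ℂ (Set.range W ∪ Set.range Wb),
      ⁅x, y⁆ ∈ Submodule.span ℂ (Set.range W ∪ Set.range Wb))
    -- (iii)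
    (hZW : ∀ k a, ⁅Z k, W a⁆ ∈ Submodule.span ℂ (Set.range W))
    (hZbWb : ∀ k a, ⁅Zb k, Wb a⁆ ∈ Submodule.span ℂ (Set.range Wb))
    -- (iv) the weights λ_a
    (lam : Fin s → Fin r → ℂ)
    (hZWb : ∀ k a, ⁅Z k, Wb a⁆ = lam a k • Wb a)
    (hZbW : ∀ k a, ⁅Zb k, W a⁆ = (starRingEnd ℂ (lam a k)) • W a)
    -- the antilinear involution σ
    (σ : L →ₛₗ[starRingEnd ℂ] L)
    (hσinv : ∀ x, σ (σ x) = x)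
    (hσZ : ∀ k, σ (Z k) = Zb k)
    (hσW : ∀ a, σ (W a) = Wb a)
    (hσbr : ∀ x y : L, σ ⁅x, y⁆ = ⁅σ x, σ y⁆)
    -- the two Hermitian inner products h and h′
    (h h' : L →ₗ[ℂ] L →ₛₗ[starRingEnd ℂ] ℂ)
    (hherm : ∀ x ∈ Submodule.span ℂ (Set.range Z ∪ Set.range W),
      ∀ y ∈ Submodule.span ℂ (Set.range Z ∪ Set.range W),
        h x y = starRingEnd ℂ (h y x))
    (hherm' : ∀ x ∈ Submodule.span ℂ (Set.range Z ∪ Set.range W),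
      ∀ y ∈ Submodule.span ℂ (Set.range Z ∪ Set.range W),
        h' x y = starRingEnd ℂ (h' y x))
    (hposdef : ∀ x ∈ Submodule.span ℂ (Set.range Z ∪ Set.range W), x ≠ 0 →
      0 < (h x x).re)
    (hposdef' : ∀ x ∈ Submodule.span ℂ (Set.range Z ∪ Set.range W), x ≠ 0 →
      0 < (h' x x).re)
    -- both make 𝔥^{1,0} and 𝔍^{1,0} orthogonal
    (horth : ∀ x ∈ Submodule.span ℂ (Set.range Z),
      ∀ y ∈ Submodule.span ℂ (Set.range W), h x y = 0)
    (horth' : ∀ x ∈ Submodule.span ℂ (Set.range Z),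
      ∀ y ∈ Submodule.span ℂ (Set.range W), h' x y = 0)
    -- both are diagonal on 𝔥^{1,0} with respect to {Z_1,…,Z_r}
    (A A' : Fin r → ℝ) (hA : ∀ i, 0 < A i) (hA' : ∀ i, 0 < A' i)
    (hdiag : ∀ i j, h (Z i) (Z j) = if i = j then (A i : ℂ) else 0)
    (hdiag' : ∀ i j, h' (Z i) (Z j) = if i = j then (A' i : ℂ) else 0)
    -- the induced fundamental forms ω and ω′
    (ω ω' : L →ₗ[ℂ] L →ₗ[ℂ] ℂ)
    (hωalt : ∀ x : L, ω x x = 0) (hωalt' : ∀ x : L, ω' x x = 0)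
    (hω10 : ∀ x ∈ Submodule.span ℂ (Set.range Z ∪ Set.range W),
      ∀ y ∈ Submodule.span ℂ (Set.range Z ∪ Set.range W), ω x y = 0)
    (hω01 : ∀ x ∈ Submodule.span ℂ (Set.range Zb ∪ Set.range Wb),
      ∀ y ∈ Submodule.span ℂ (Set.range Zb ∪ Set.range Wb), ω x y = 0)
    (hω10' : ∀ x ∈ Submodule.span ℂ (Set.range Z ∪ Set.range W),
      ∀ y ∈ Submodule.span ℂ (Set.range Z ∪ Set.range W), ω' x y = 0)
    (hω01' : ∀ x ∈ Submodule.span ℂ (Set.range Zb ∪ Set.range Wb),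
      ∀ y ∈ Submodule.span ℂ (Set.range Zb ∪ Set.range Wb), ω' x y = 0)
    (hωh : ∀ x ∈ Submodule.span ℂ (Set.range Z ∪ Set.range W),
      ∀ y ∈ Submodule.span ℂ (Set.range Z ∪ Set.range W), ω x (σ y) = I * h x y)
    (hωh' : ∀ x ∈ Submodule.span ℂ (Set.range Z ∪ Set.range W),
      ∀ y ∈ Submodule.span ℂ (Set.range Z ∪ Set.range W), ω' x (σ y) = I * h' x y)
    -- bases of 𝔤^{1,0} and the matrices of h, h′ with their inverses
    (n : ℕ) (hn : n = r + s) (Xf Xf' : Fin n → L)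
    (hXind : LinearIndependent ℂ Xf) (hXind' : LinearIndependent ℂ Xf')
    (hXspan : Submodule.span ℂ (Set.range Xf) =
      Submodule.span ℂ (Set.range Z ∪ Set.range W))
    (hXspan' : Submodule.span ℂ (Set.range Xf') =
      Submodule.span ℂ (Set.range Z ∪ Set.range W))
    (g ginv g' ginv' : Fin n → Fin n → ℂ)
    (hgmat : ∀ a b, g a b = h (Xf a) (Xf b))
    (hgmat' : ∀ a b, g' a b = h' (Xf' a) (Xf' b))
    (hinv : ∀ a b, ∑ cc, g a cc * ginv cc b = if a = b then 1 else 0)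
    (hinv' : ∀ a b, ∑ cc, g' a cc * ginv' cc b = if a = b then 1 else 0)
    -- the (1,0)- and (0,1)-projections and the complex structure J
    (p10 p01 : L → L)
    (hp : ∀ v : L, p10 v ∈ Submodule.span ℂ (Set.range Z ∪ Set.range W) ∧
      p01 v ∈ Submodule.span ℂ (Set.range Zb ∪ Set.range Wb) ∧ p10 v + p01 v = v)
    (Jmap : L → L) (hJmap : ∀ v, Jmap v = I • p10 v - I • p01 v)
    -- the Bismut-Ricci forms of ω and ω′
    (ρB ρB' : L → L → ℂ)
    (hρ : ∀ X Y : L, ρB X Y =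
      -(∑ a, ∑ b, (starRingEnd ℂ (ginv a b) * ω ⁅p10 ⁅X, Y⁆, Xf a⁆ (σ (Xf b))
          + ginv a b * ω ⁅p01 ⁅X, Y⁆, σ (Xf a)⁆ (Xf b)))
      + I * ∑ a, ∑ b, starRingEnd ℂ (ginv a b) * ω ⁅X, Y⁆ (Jmap ⁅Xf a, σ (Xf b)⁆))
    (hρ' : ∀ X Y : L, ρB' X Y =
      -(∑ a, ∑ b, (starRingEnd ℂ (ginv' a b) * ω' ⁅p10 ⁅X, Y⁆, Xf' a⁆ (σ (Xf' b))
          + ginv' a b * ω' ⁅p01 ⁅X, Y⁆, σ (Xf' a)⁆ (Xf' b)))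
      + I * ∑ a, ∑ b, starRingEnd ℂ (ginv' a b) * ω' ⁅X, Y⁆ (Jmap ⁅Xf' a, σ (Xf' b)⁆)) :
    ∀ X ∈ Submodule.span ℂ (Set.range Z ∪ Set.range W),
      ∀ Y ∈ Submodule.span ℂ (Set.range Zb ∪ Set.range Wb),
        ρB X Y = ρB' X Y := by  classical
  intro X hX Y hY
  set V : Submodule ℂ L := Submodule.span ℂ (Set.range Z ∪ Set.range W) with hVdef
  set Vb : Submodule ℂ L := Submodule.span ℂ (Set.range Zb ∪ Set.range Wb) with hVbdef
  have hZV : ∀ k, Z k ∈ V := fun k => Submodule.subset_span (Or.inl ⟨k, rfl⟩)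
  have hWV : ∀ a, W a ∈ V := fun a => Submodule.subset_span (Or.inr ⟨a, rfl⟩)
  have hZbVb : ∀ k, Zb k ∈ Vb := fun k => Submodule.subset_span (Or.inl ⟨k, rfl⟩)
  have hWbVb : ∀ a, Wb a ∈ Vb := fun a => Submodule.subset_span (Or.inr ⟨a, rfl⟩)
  have hWle : Submodule.span ℂ (Set.range W) ≤ V := Submodule.span_mono Set.subset_union_right
  have hWble : Submodule.span ℂ (Set.range Wb) ≤ Vb := Submodule.span_mono Set.subset_union_right
  have hZle : Submodule.span ℂ (Set.range Z) ≤ V := Submodule.span_mono Set.subset_union_left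
  have hWJ : Submodule.span ℂ (Set.range W) ≤ Submodule.span ℂ (Set.range W ∪ Set.range Wb) :=
    Submodule.span_mono Set.subset_union_left
  have hWbJ : Submodule.span ℂ (Set.range Wb) ≤ Submodule.span ℂ (Set.range W ∪ Set.range Wb) :=
    Submodule.span_mono Set.subset_union_right
  -- disjointness of V and Vb
  have hdisj : ∀ v : L, v ∈ V → v ∈ Vb → v = 0 := by
    have c1 : Set.range Z = bas '' Set.range (Sum.inl ∘ Sum.inl : Fin r → (Fin r ⊕ Fin r) ⊕ (Fin s ⊕ Fin s)) := by
      rw [← Set.range_comp]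
      have e : Z = bas ∘ (Sum.inl ∘ Sum.inl) := by funext k; exact hZ k
      rw [e]
    have c2 : Set.range W = bas '' Set.range (Sum.inr ∘ Sum.inl : Fin s → (Fin r ⊕ Fin r) ⊕ (Fin s ⊕ Fin s)) := by
      rw [← Set.range_comp]
      have e : W = bas ∘ (Sum.inr ∘ Sum.inl) := by funext a; exact hW a
      rw [e]
    have c3 : Set.range Zb = bas '' Set.range (Sum.inl ∘ Sum.inr : Fin r → (Fin r ⊕ Fin r) ⊕ (Fin s ⊕ Fin s)) := by
      rw [← Set.range_comp]
      have e : Zb = bas ∘ (Sum.inl ∘ Sum.inr) := by funext k; exact hZb k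
      rw [e]
    have c4 : Set.range Wb = bas '' Set.range (Sum.inr ∘ Sum.inr : Fin s → (Fin r ⊕ Fin r) ⊕ (Fin s ⊕ Fin s)) := by
      rw [← Set.range_comp]
      have e : Wb = bas ∘ (Sum.inr ∘ Sum.inr) := by funext a; exact hWb a
      rw [e]
    have hds : Disjoint
        (Set.range (Sum.inl ∘ Sum.inl : Fin r → (Fin r ⊕ Fin r) ⊕ (Fin s ⊕ Fin s)) ∪
          Set.range (Sum.inr ∘ Sum.inl : Fin s → (Fin r ⊕ Fin r) ⊕ (Fin s ⊕ Fin s)))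
        (Set.range (Sum.inl ∘ Sum.inr : Fin r → (Fin r ⊕ Fin r) ⊕ (Fin s ⊕ Fin s)) ∪
          Set.range (Sum.inr ∘ Sum.inr : Fin s → (Fin r ⊕ Fin r) ⊕ (Fin s ⊕ Fin s))) := by
      rw [Set.disjoint_left]
      rintro x (⟨k, rfl⟩ | ⟨a, rfl⟩) (⟨l, hcol⟩ | ⟨b, hcol⟩) <;>
        simp only [Function.comp_apply] at hcol <;> simp at hcol
    have hd2 := (bas.linearIndependent.disjoint_span_image hds)
    intro v hv1 hv2
    rw [hVdef, c1, c2, ← Set.image_union] at hv1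
    rw [hVbdef, c3, c4, ← Set.image_union] at hv2
    exact Submodule.disjoint_def.mp hd2 v hv1 hv2
  -- uniqueness of the decomposition
  have huniq : ∀ v av bv, av ∈ V → bv ∈ Vb → av + bv = v → p10 v = av ∧ p01 v = bv := by
    intro v a0 b0 ha hb hab
    obtain ⟨h1, h2, h3⟩ := hp v
    have e : p10 v - a0 = b0 - p01 v := by
      rw [sub_eq_sub_iff_add_eq_add, h3, ← hab, add_comm]
    have m1 : p10 v - a0 ∈ V := sub_mem h1 ha
    have m2 : p10 v - a0 ∈ Vb := by rw [e]; exact sub_mem hb h2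
    have z := hdisj _ m1 m2
    have e1 : p10 v = a0 := by rwa [sub_eq_zero] at z
    refine ⟨e1, ?_⟩
    have e2 : a0 + p01 v = a0 + b0 := by
      rw [e1] at h3
      rw [h3, ← hab]
    exact add_left_cancel e2
  -- sigma facts
  have hσZb : ∀ k, σ (Zb k) = Z k := fun k => by rw [← hσZ, hσinv]
  have hσWb : ∀ a, σ (Wb a) = W a := fun a => by rw [← hσW, hσinv]
  have hσVbV : ∀ v ∈ Vb, σ v ∈ V := by
    intro v hv
    induction hv using Submodule.span_induction with
    | mem x hx =>
      rcases hx with ⟨k, rfl⟩ | ⟨a, rfl⟩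
      · rw [hσZb]; exact hZV k
      · rw [hσWb]; exact hWV a
    | zero => rw [map_zero]; exact zero_mem V
    | add x y hx hy ihx ihy => rw [map_add]; exact add_mem ihx ihy
    | smul c x hx ihx => rw [LinearMap.map_smulₛₗ]; exact Submodule.smul_mem _ _ ihx
  have hσVWVWb : ∀ v ∈ Submodule.span ℂ (Set.range W), σ v ∈ Submodule.span ℂ (Set.range Wb) := by
    intro v hv
    induction hv using Submodule.span_induction with
    | mem x hx =>
      obtain ⟨a, rfl⟩ := hx
      rw [hσW]; exact Submodule.subset_span ⟨a, rfl⟩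
    | zero => rw [map_zero]; exact zero_mem _
    | add x y hx hy ihx ihy => rw [map_add]; exact add_mem ihx ihy
    | smul c x hx ihx => rw [LinearMap.map_smulₛₗ]; exact Submodule.smul_mem _ _ ihx
  -- bracket closure lemmas
  have hbrZ : ∀ k, ∀ y ∈ V, ⁅Z k, y⁆ ∈ V := by
    intro k y hy
    induction hy using Submodule.span_induction with
    | mem x hx =>
      rcases hx with ⟨l, rfl⟩ | ⟨a, rfl⟩
      · rw [hZZ]; exact zero_mem V
      · exact hWle (hZW k a)
    | zero => rw [lie_zero]; exact zero_mem V
    | add x y hx hy ihx ihy => rw [lie_add]; exact add_mem ihx ihy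
    | smul c x hx ihx => rw [lie_smul]; exact Submodule.smul_mem _ _ ihx
  have hWmemJ : ∀ a, W a ∈ Submodule.span ℂ (Set.range W ∪ Set.range Wb) :=
    fun a => Submodule.subset_span (Or.inl ⟨a, rfl⟩)
  have hbrW : ∀ a, ∀ y ∈ V, ⁅W a, y⁆ ∈ V := by
    intro a y hy
    induction hy using Submodule.span_induction with
    | mem x hx =>
      rcases hx with ⟨l, rfl⟩ | ⟨b, rfl⟩
      · rw [← lie_skew]; exact neg_mem (hWle (hZW l a))
      · rw [hJabel (W a) (hWmemJ a) (W b) (hWmemJ b)]; exact zero_mem V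
    | zero => rw [lie_zero]; exact zero_mem V
    | add x y hx hy ihx ihy => rw [lie_add]; exact add_mem ihx ihy
    | smul c x hx ihx => rw [lie_smul]; exact Submodule.smul_mem _ _ ihx
  have hVV : ∀ x ∈ V, ∀ y ∈ V, ⁅x, y⁆ ∈ V := by
    intro x hx
    induction hx using Submodule.span_induction with
    | mem x hx =>
      rcases hx with ⟨k, rfl⟩ | ⟨a, rfl⟩
      · exact hbrZ k
      · exact hbrW a
    | zero => intro y hy; rw [zero_lie]; exact zero_mem V
    | add x y hx hy ihx ihy =>
      intro y0 hy0; rw [add_lie]; exact add_mem (ihx y0 hy0) (ihy y0 hy0)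
    | smul c x hx ihx =>
      intro y0 hy0; rw [smul_lie]; exact Submodule.smul_mem _ _ (ihx y0 hy0)
  have hbrZVWb : ∀ k, ∀ y ∈ Submodule.span ℂ (Set.range Wb),
      ⁅Z k, y⁆ ∈ Submodule.span ℂ (Set.range Wb) := by
    intro k y hy
    induction hy using Submodule.span_induction with
    | mem x hx =>
      obtain ⟨a, rfl⟩ := hx
      rw [hZWb]; exact Submodule.smul_mem _ _ (Submodule.subset_span ⟨a, rfl⟩)
    | zero => rw [lie_zero]; exact zero_mem _
    | add x y hx hy ihx ihy => rw [lie_add]; exact add_mem ihx ihy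
    | smul c x hx ihx => rw [lie_smul]; exact Submodule.smul_mem _ _ ihx
  have hbrZbVW : ∀ k, ∀ y ∈ Submodule.span ℂ (Set.range W),
      ⁅Zb k, y⁆ ∈ Submodule.span ℂ (Set.range W) := by
    intro k y hy
    induction hy using Submodule.span_induction with
    | mem x hx =>
      obtain ⟨a, rfl⟩ := hx
      rw [hZbW]; exact Submodule.smul_mem _ _ (Submodule.subset_span ⟨a, rfl⟩)
    | zero => rw [lie_zero]; exact zero_mem _
    | add x y hx hy ihx ihy => rw [lie_add]; exact add_mem ihx ihy
    | smul c x hx ihx => rw [lie_smul]; exact Submodule.smul_mem _ _ ihx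
  have hbrZspanWb : ∀ x ∈ Submodule.span ℂ (Set.range Z),
      ∀ y ∈ Submodule.span ℂ (Set.range Wb), ⁅x, y⁆ ∈ Submodule.span ℂ (Set.range Wb) := by
    intro x hx
    induction hx using Submodule.span_induction with
    | mem x hx =>
      obtain ⟨k, rfl⟩ := hx
      exact hbrZVWb k
    | zero => intro y hy; rw [zero_lie]; exact zero_mem _
    | add x y hx hy ihx ihy =>
      intro y0 hy0; rw [add_lie]; exact add_mem (ihx y0 hy0) (ihy y0 hy0)
    | smul c x hx ihx =>
      intro y0 hy0; rw [smul_lie]; exact Submodule.smul_mem _ _ (ihx y0 hy0)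
  -- antisymmetry of alternating forms
  have halt : ∀ (ω0 : L →ₗ[ℂ] L →ₗ[ℂ] ℂ), (∀ x, ω0 x x = 0) → ∀ x y, ω0 x y = -ω0 y x := by
    intro ω0 h0 x y
    have e := h0 (x + y)
    simp only [map_add, LinearMap.add_apply, h0] at e
    linear_combination e
  -- coordinate functionals along the Z-directions
  set cz : Fin r → (L →ₗ[ℂ] ℂ) := fun k => bas.coord (Sum.inl (Sum.inl k)) with hczdef
  have czZ : ∀ k l, cz k (Z l) = if l = k then 1 else 0 := by
    intro k l
    rw [hczdef]
    simp only [hZ, Module.Basis.coord_apply, Module.Basis.repr_self_apply]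
    by_cases hlk : l = k
    · simp [hlk]
    · have : Sum.inl (Sum.inl l) ≠ (Sum.inl (Sum.inl k) : (Fin r ⊕ Fin r) ⊕ (Fin s ⊕ Fin s)) := by
        simp [hlk]
      simp [this, hlk]
  have czZkk : ∀ k, cz k (Z k) = 1 := by intro k; rw [czZ]; simp
  have czW : ∀ k a, cz k (W a) = 0 := by
    intro k a
    rw [hczdef]
    simp [hW, Module.Basis.coord_apply, Module.Basis.repr_self_apply]
  -- the projection onto the 𝔍^{1,0}-part
  set piW : L →ₗ[ℂ] L := ∑ a, LinearMap.smulRight (bas.coord (Sum.inr (Sum.inl a))) (W a) with hpiWdef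
  have piWapply : ∀ v, piW v = ∑ a, (bas.repr v (Sum.inr (Sum.inl a))) • W a := by
    intro v
    rw [hpiWdef]
    simp [LinearMap.sum_apply, LinearMap.smulRight_apply, Module.Basis.coord_apply]
  have piWZ : ∀ k, piW (Z k) = 0 := by
    intro k
    rw [piWapply]
    simp [hZ, Module.Basis.repr_self_apply]
  have piWW : ∀ b, piW (W b) = W b := by
    intro b
    rw [piWapply]
    simp only [hW, Module.Basis.repr_self_apply]
    rw [Finset.sum_eq_single b]
    · simp
    · intro c _ hc
      have : (Sum.inr (Sum.inl b) : (Fin r ⊕ Fin r) ⊕ (Fin s ⊕ Fin s)) ≠ Sum.inr (Sum.inl c) := by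
        simp [Ne.symm hc]
      simp [this]
    · intro hb; exact absurd (Finset.mem_univ b) hb
  have piWmem : ∀ v, piW v ∈ Submodule.span ℂ (Set.range W) := by
    intro v
    rw [piWapply]
    exact Submodule.sum_mem _ (fun a _ => Submodule.smul_mem _ _ (Submodule.subset_span ⟨a, rfl⟩))
  -- the projection onto the 𝔥^{1,0}-part
  set zP : L →ₗ[ℂ] L := ∑ k, LinearMap.smulRight (cz k) (Z k) with hzPdef
  have zPapply : ∀ v, zP v = ∑ k, cz k v • Z k := by
    intro v
    rw [hzPdef]
    simp [LinearMap.sum_apply, LinearMap.smulRight_apply]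
  have hzPmem : ∀ v, zP v ∈ Submodule.span ℂ (Set.range Z) := by
    intro v
    rw [zPapply]
    exact Submodule.sum_mem _ (fun k _ => Submodule.smul_mem _ _ (Submodule.subset_span ⟨k, rfl⟩))
  have hdec : ∀ u ∈ V, zP u + piW u = u := by
    intro u hu
    induction hu using Submodule.span_induction with
    | mem x hx =>
      rcases hx with ⟨l, rfl⟩ | ⟨a, rfl⟩
      · rw [piWZ, zPapply, add_zero]
        simp only [czZ]
        rw [Finset.sum_eq_single l]
        · simp
        · intro c _ hc; simp [Ne.symm hc]
        · intro hb; exact absurd (Finset.mem_univ l) hb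
      · rw [piWW, zPapply]
        simp [czW]
    | zero => simp
    | add x y hx hy ihx ihy =>
      simp only [map_add]
      rw [add_add_add_comm, ihx, ihy]
    | smul c x hx ihx =>
      simp only [map_smul]
      rw [← smul_add, ihx]
  have hσzP : ∀ v, σ (zP v) = ∑ k, (starRingEnd ℂ) (cz k v) • Zb k := by
    intro v
    rw [zPapply, map_sum]
    apply Finset.sum_congr rfl
    intro k _
    rw [LinearMap.map_smulₛₗ, hσZ]
  -- the canonical (1,0)/(0,1)-components of ⁅X, Y⁆
  obtain ⟨hξV, hηVb, hsum⟩ := hp ⁅X, Y⁆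
  set ξ := p10 ⁅X, Y⁆ with hξdef
  set η := p01 ⁅X, Y⁆ with hηdef
  set sη := σ η with hsηdef
  have hsηV : sη ∈ V := hσVbV η hηVb
  have hσsη : σ sη = η := hσinv η
  have hJval : ∀ av bv, av ∈ V → bv ∈ Vb → Jmap (av + bv) = I • av - I • bv := by
    intro a0 b0 ha hb
    obtain ⟨e1, e2⟩ := huniq (a0 + b0) a0 b0 ha hb rfl
    rw [hJmap, e1, e2]
  -- the per-metric computation
  have main : ∀ (h0 : L →ₗ[ℂ] L →ₛₗ[starRingEnd ℂ] ℂ) (ω0 : L →ₗ[ℂ] L →ₗ[ℂ] ℂ)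
      (Xf0 : Fin n → L) (g0 ginv0 : Fin n → Fin n → ℂ) (A0 : Fin r → ℝ)
      (t0 t20 : Fin n → Fin n → ℂ),
      (∀ i, 0 < A0 i) →
      (∀ x ∈ V, ∀ y ∈ V, h0 x y = (starRingEnd ℂ) (h0 y x)) →
      (∀ x ∈ Submodule.span ℂ (Set.range Z), ∀ y ∈ Submodule.span ℂ (Set.range W), h0 x y = 0) →
      (∀ i j, h0 (Z i) (Z j) = if i = j then (A0 i : ℂ) else 0) →
      (∀ x, ω0 x x = 0) →
      (∀ x ∈ V, ∀ y ∈ V, ω0 x y = 0) →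
      (∀ x ∈ Vb, ∀ y ∈ Vb, ω0 x y = 0) →
      (∀ x ∈ V, ∀ y ∈ V, ω0 x (σ y) = I * h0 x y) →
      (Submodule.span ℂ (Set.range Xf0) = V) →
      (∀ a b, g0 a b = h0 (Xf0 a) (Xf0 b)) →
      (∀ a b, ∑ c, g0 a c * ginv0 c b = if a = b then 1 else 0) →
      (∀ a, ⁅ξ, Xf0 a⁆ = ∑ c, t0 a c • Xf0 c) →
      (∀ a, ⁅sη, Xf0 a⁆ = ∑ c, t20 a c • Xf0 c) →
      (-(∑ a, ∑ b, ((starRingEnd ℂ) (ginv0 a b) * ω0 ⁅ξ, Xf0 a⁆ (σ (Xf0 b))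
          + ginv0 a b * ω0 ⁅η, σ (Xf0 a)⁆ (Xf0 b)))
        + I * ∑ a, ∑ b, (starRingEnd ℂ) (ginv0 a b) * ω0 ⁅X, Y⁆ (Jmap ⁅Xf0 a, σ (Xf0 b)⁆))
      = -(I * (∑ a, t0 a a) - I * (starRingEnd ℂ) (∑ a, t20 a a))
        + I * ∑ k, (-(I/2)) * (cz k ξ + (starRingEnd ℂ) (cz k sη)) := by
    intro h0 ω0 Xf0 g0 ginv0 A0 t0 t20 hA0 hherm0 horth0 hdiag0 hωalt0 hω100 hω010 hωh0
      hXsp0 hg0 hinv0 ht0 ht20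
    have hXf0V : ∀ a, Xf0 a ∈ V := fun a => by
      rw [← hXsp0]; exact Submodule.subset_span ⟨a, rfl⟩
    have hA0ne : ∀ k, (A0 k : ℂ) ≠ 0 := fun k => by
      exact_mod_cast (hA0 k).ne'
    have hzc : ∀ k, ∃ c : Fin n → ℂ, ∑ i, c i • Xf0 i = Z k := fun k =>
      (Submodule.mem_span_range_iff_exists_fun ℂ).mp (by rw [hXsp0]; exact hZV k)
    choose zc hzc using hzc
    have hgsym : ∀ a b, (starRingEnd ℂ) (g0 a b) = g0 b a := by
      intro a b
      rw [hg0, hg0, ← hherm0 (Xf0 b) (hXf0V b) (Xf0 a) (hXf0V a)]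
    have hinv20 := aux_two_sided g0 ginv0 hinv0
    have hconjinv := aux_conj_inv g0 ginv0 hgsym hinv0 hinv20
    have hdelta1 : ∀ a c, ∑ b, (starRingEnd ℂ) (ginv0 a b) * g0 c b = if c = a then 1 else 0 := by
      intro a c
      calc ∑ b, (starRingEnd ℂ) (ginv0 a b) * g0 c b = ∑ b, g0 c b * ginv0 b a := by
            apply Finset.sum_congr rfl; intro b _; rw [hconjinv]; ring
        _ = if c = a then 1 else 0 := hinv0 c a
    have hdelta2 : ∀ b c, ∑ a, (starRingEnd ℂ) (ginv0 a b) * g0 a c = if b = c then 1 else 0 := by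
      intro b c
      calc ∑ a, (starRingEnd ℂ) (ginv0 a b) * g0 a c = ∑ a, ginv0 b a * g0 a c := by
            apply Finset.sum_congr rfl; intro a _; rw [hconjinv]
        _ = if b = c then 1 else 0 := hinv20 b c
    -- coordinates via the metric
    have hch1 : ∀ u ∈ V, ∀ k, h0 u (Z k) = cz k u * (A0 k : ℂ) := by
      intro u hu
      induction hu using Submodule.span_induction with
      | mem x hx =>
        intro k
        rcases hx with ⟨l, rfl⟩ | ⟨a, rfl⟩
        · rw [hdiag0 l k, czZ]
          by_cases hlk : l = k <;> simp [hlk]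
        · rw [hherm0 (W a) (hWV a) (Z k) (hZV k),
            horth0 (Z k) (Submodule.subset_span ⟨k, rfl⟩) (W a) (Submodule.subset_span ⟨a, rfl⟩),
            czW]
          simp
      | zero => intro k; simp
      | add x y hx hy ihx ihy =>
        intro k
        simp only [map_add, LinearMap.add_apply]
        rw [ihx k, ihy k]; ring
      | smul c x hx ihx =>
        intro k
        simp only [map_smul, LinearMap.smul_apply, smul_eq_mul]
        rw [ihx k]; ring
    have hch2 : ∀ u ∈ V, ∀ k, h0 (Z k) u = (A0 k : ℂ) * (starRingEnd ℂ) (cz k u) := by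
      intro u hu k
      rw [hherm0 (Z k) (hZV k) u hu, hch1 u hu k, map_mul, Complex.conj_ofReal]
      ring
    -- the two contraction identities
    have K1 : ∀ k b, ∑ a, (starRingEnd ℂ) (ginv0 a b) * cz k (Xf0 a)
        = (starRingEnd ℂ) (zc k b) * ((A0 k : ℂ))⁻¹ := by
      intro k b
      have e2 : ∀ a, h0 (Xf0 a) (Z k) = ∑ c, (starRingEnd ℂ) (zc k c) * g0 a c := by
        intro a
        rw [← hzc k, map_sum]
        apply Finset.sum_congr rfl
        intro c _
        rw [LinearMap.map_smulₛₗ, smul_eq_mul, hg0]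
      have e1 : ∀ a, cz k (Xf0 a) = (∑ c, (starRingEnd ℂ) (zc k c) * g0 a c) * ((A0 k : ℂ))⁻¹ := by
        intro a
        rw [← e2, hch1 (Xf0 a) (hXf0V a) k, mul_assoc, mul_inv_cancel₀ (hA0ne k), mul_one]
      calc ∑ a, (starRingEnd ℂ) (ginv0 a b) * cz k (Xf0 a)
          = ∑ a, ∑ c, (starRingEnd ℂ) (zc k c) * ((A0 k : ℂ))⁻¹
              * ((starRingEnd ℂ) (ginv0 a b) * g0 a c) := by
            apply Finset.sum_congr rfl; intro a _
            rw [e1 a, Finset.sum_mul, Finset.mul_sum]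
            apply Finset.sum_congr rfl; intro c _; ring
        _ = ∑ c, (starRingEnd ℂ) (zc k c) * ((A0 k : ℂ))⁻¹ * (if b = c then 1 else 0) := by
            rw [Finset.sum_comm]
            apply Finset.sum_congr rfl; intro c _
            rw [← Finset.mul_sum, hdelta2]
        _ = (starRingEnd ℂ) (zc k b) * ((A0 k : ℂ))⁻¹ := by
            rw [Finset.sum_eq_single b]
            · simp
            · intro c _ hc; simp [Ne.symm hc]
            · intro hb; exact absurd (Finset.mem_univ b) hb
    have K2 : ∀ k a, ∑ b, (starRingEnd ℂ) (ginv0 a b) * (starRingEnd ℂ) (cz k (Xf0 b))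
        = zc k a * ((A0 k : ℂ))⁻¹ := by
      intro k a
      have e2 : ∀ b, h0 (Z k) (Xf0 b) = ∑ c, zc k c * g0 c b := by
        intro b
        rw [← hzc k, map_sum, LinearMap.sum_apply]
        apply Finset.sum_congr rfl
        intro c _
        rw [map_smul, LinearMap.smul_apply, smul_eq_mul, hg0]
      have e1 : ∀ b, (starRingEnd ℂ) (cz k (Xf0 b)) = (∑ c, zc k c * g0 c b) * ((A0 k : ℂ))⁻¹ := by
        intro b
        rw [← e2, hch2 (Xf0 b) (hXf0V b) k, mul_comm ((A0 k : ℂ)) _, mul_assoc,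
          mul_inv_cancel₀ (hA0ne k), mul_one]
      calc ∑ b, (starRingEnd ℂ) (ginv0 a b) * (starRingEnd ℂ) (cz k (Xf0 b))
          = ∑ b, ∑ c, zc k c * ((A0 k : ℂ))⁻¹ * ((starRingEnd ℂ) (ginv0 a b) * g0 c b) := by
            apply Finset.sum_congr rfl; intro b _
            rw [e1 b, Finset.sum_mul, Finset.mul_sum]
            apply Finset.sum_congr rfl; intro c _; ring
        _ = ∑ c, zc k c * ((A0 k : ℂ))⁻¹ * (if c = a then 1 else 0) := by
            rw [Finset.sum_comm]
            apply Finset.sum_congr rfl; intro c _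
            rw [← Finset.mul_sum, hdelta1]
        _ = zc k a * ((A0 k : ℂ))⁻¹ := by
            rw [Finset.sum_eq_single a]
            · simp
            · intro c _ hc; simp [hc]
            · intro hb; exact absurd (Finset.mem_univ a) hb
    -- the basic trace contraction
    have hinner : ∀ tt : Fin n → Fin n → ℂ,
        ∑ a, ∑ b, (starRingEnd ℂ) (ginv0 a b) * (∑ c, tt a c * g0 c b) = ∑ a, tt a a := by
      intro tt
      calc ∑ a, ∑ b, (starRingEnd ℂ) (ginv0 a b) * (∑ c, tt a c * g0 c b)
          = ∑ a, ∑ c, tt a c * (∑ b, (starRingEnd ℂ) (ginv0 a b) * g0 c b) := by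
            apply Finset.sum_congr rfl; intro a _
            simp only [Finset.mul_sum]
            rw [Finset.sum_comm]
            apply Finset.sum_congr rfl; intro c _
            apply Finset.sum_congr rfl; intro b _
            ring
        _ = ∑ a, tt a a := by
            apply Finset.sum_congr rfl; intro a _
            simp only [hdelta1, mul_ite, mul_one, mul_zero]
            rw [Finset.sum_eq_single a]
            · simp
            · intro c _ hc; simp [hc]
            · intro hb; exact absurd (Finset.mem_univ a) hb
    -- brackets with ξ and sη stay in V
    have hbrH : ∀ a, ⁅ξ, Xf0 a⁆ ∈ V := fun a => by
      rw [ht0 a]; exact Submodule.sum_mem _ (fun c _ => Submodule.smul_mem _ _ (hXf0V c))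
    have hbrH2 : ∀ a, ⁅sη, Xf0 a⁆ ∈ V := fun a => by
      rw [ht20 a]; exact Submodule.sum_mem _ (fun c _ => Submodule.smul_mem _ _ (hXf0V c))
    have hval1 : ∀ a b, h0 ⁅ξ, Xf0 a⁆ (Xf0 b) = ∑ c, t0 a c * g0 c b := by
      intro a b
      rw [ht0 a, map_sum, LinearMap.sum_apply]
      apply Finset.sum_congr rfl; intro c _
      rw [map_smul, LinearMap.smul_apply, smul_eq_mul, hg0]
    have hval2 : ∀ a b, h0 ⁅sη, Xf0 a⁆ (Xf0 b) = ∑ c, t20 a c * g0 c b := by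
      intro a b
      rw [ht20 a, map_sum, LinearMap.sum_apply]
      apply Finset.sum_congr rfl; intro c _
      rw [map_smul, LinearMap.smul_apply, smul_eq_mul, hg0]
    have hS1 : ∑ a, ∑ b, (starRingEnd ℂ) (ginv0 a b) * ω0 ⁅ξ, Xf0 a⁆ (σ (Xf0 b))
        = I * ∑ a, t0 a a := by
      calc ∑ a, ∑ b, (starRingEnd ℂ) (ginv0 a b) * ω0 ⁅ξ, Xf0 a⁆ (σ (Xf0 b))
          = ∑ a, ∑ b, I * ((starRingEnd ℂ) (ginv0 a b) * (∑ c, t0 a c * g0 c b)) := by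
            apply Finset.sum_congr rfl; intro a _
            apply Finset.sum_congr rfl; intro b _
            rw [hωh0 _ (hbrH a) _ (hXf0V b), hval1 a b]
            ring
        _ = I * ∑ a, ∑ b, (starRingEnd ℂ) (ginv0 a b) * (∑ c, t0 a c * g0 c b) := by
            simp only [Finset.mul_sum]
        _ = I * ∑ a, t0 a a := by rw [hinner t0]
    have hbt : ∀ a, ⁅η, σ (Xf0 a)⁆ = σ ⁅sη, Xf0 a⁆ := by
      intro a
      rw [hσbr, hσsη]
    have hS2 : ∑ a, ∑ b, ginv0 a b * ω0 ⁅η, σ (Xf0 a)⁆ (Xf0 b)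
        = -(I * (starRingEnd ℂ) (∑ a, t20 a a)) := by
      have e : ∀ a b, ω0 ⁅η, σ (Xf0 a)⁆ (Xf0 b)
          = -(I * (starRingEnd ℂ) (∑ c, t20 a c * g0 c b)) := by
        intro a b
        rw [hbt a, halt ω0 hωalt0 (σ ⁅sη, Xf0 a⁆) (Xf0 b),
          hωh0 (Xf0 b) (hXf0V b) ⁅sη, Xf0 a⁆ (hbrH2 a),
          hherm0 (Xf0 b) (hXf0V b) ⁅sη, Xf0 a⁆ (hbrH2 a), hval2 a b]
      calc ∑ a, ∑ b, ginv0 a b * ω0 ⁅η, σ (Xf0 a)⁆ (Xf0 b)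
          = ∑ a, ∑ b,
              -(I * (starRingEnd ℂ) ((starRingEnd ℂ) (ginv0 a b) * (∑ c, t20 a c * g0 c b))) := by
            apply Finset.sum_congr rfl; intro a _
            apply Finset.sum_congr rfl; intro b _
            rw [e a b, map_mul, Complex.conj_conj]
            ring
        _ = -(I * (starRingEnd ℂ)
              (∑ a, ∑ b, (starRingEnd ℂ) (ginv0 a b) * (∑ c, t20 a c * g0 c b))) := by
            simp only [map_sum, Finset.mul_sum, Finset.sum_neg_distrib]
        _ = -(I * (starRingEnd ℂ) (∑ a, t20 a a)) := by rw [hinner t20]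
    have hS3 : ∑ a, ∑ b, (starRingEnd ℂ) (ginv0 a b) * ω0 ⁅X, Y⁆ (Jmap ⁅Xf0 a, σ (Xf0 b)⁆)
        = ∑ k, (-(I/2)) * (cz k ξ + (starRingEnd ℂ) (cz k sη)) := by
      -- evaluation of ω0 ⁅X,Y⁆ on the two pieces
      have hωχV : ∀ w ∈ V, ω0 ⁅X, Y⁆ w = -(I * h0 w sη) := by
        intro w hw
        rw [← hsum, map_add, LinearMap.add_apply, hω100 ξ hξV w hw, zero_add,
          halt ω0 hωalt0 η w, ← hσsη, hωh0 w hw sη hsηV]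
      have hωχVb : ∀ w ∈ Vb, ω0 ⁅X, Y⁆ w = I * h0 ξ (σ w) := by
        intro w hw
        rw [← hsum, map_add, LinearMap.add_apply, hω010 η hηVb w hw, add_zero]
        conv_lhs => rw [← hσinv w]
        rw [hωh0 ξ hξV (σ w) (hσVbV w hw)]
      -- the pointwise bracket decomposition
      have hbrdec : ∀ u, u ∈ V → ∀ v, v ∈ V → ω0 ⁅X, Y⁆ (Jmap ⁅u, σ v⁆)
          = (∑ k, (-(I/2) * (cz k u * (starRingEnd ℂ) (cz k v))) * (h0 (Z k) sη + h0 ξ (Z k)))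
            - (∑ k, (starRingEnd ℂ) (cz k v) * h0 ⁅Zb k, piW u⁆ sη)
            + (∑ k, cz k u * h0 ξ ⁅Zb k, piW v⁆) := by
        intro u hu v hv
        have hσv : σ v = (∑ k, (starRingEnd ℂ) (cz k v) • Zb k) + σ (piW v) := by
          conv_lhs => rw [← hdec v hv]
          rw [map_add, hσzP]
        have hT1 : ⁅zP u, ∑ k, (starRingEnd ℂ) (cz k v) • Zb k⁆
            = (∑ k, (-(I/2) * (cz k u * (starRingEnd ℂ) (cz k v))) • Z k)
              + ∑ k, (-(I/2) * (cz k u * (starRingEnd ℂ) (cz k v))) • Zb k := by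
          rw [zPapply, aux_sum_lie]
          have e1 : ∀ k, ⁅cz k u • Z k, ∑ l, (starRingEnd ℂ) (cz l v) • Zb l⁆
              = (-(I/2) * (cz k u * (starRingEnd ℂ) (cz k v))) • Z k
                + (-(I/2) * (cz k u * (starRingEnd ℂ) (cz k v))) • Zb k := by
            intro k
            rw [smul_lie, aux_lie_sum]
            have e2 : ∀ l, ⁅Z k, (starRingEnd ℂ) (cz l v) • Zb l⁆
                = if k = l then ((starRingEnd ℂ) (cz k v) * (-(I/2))) • (Z k + Zb k) else 0 := by
              intro l
              rw [lie_smul, hZZb k l]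
              by_cases hkl : k = l
              · subst hkl; rw [if_pos rfl, if_pos rfl, smul_smul]
              · rw [if_neg hkl, if_neg hkl, smul_zero]
            simp only [e2]
            rw [Finset.sum_ite_eq]
            simp only [Finset.mem_univ, if_true]
            module
          simp only [e1]
          rw [Finset.sum_add_distrib]
        have hT3 : ⁅piW u, ∑ k, (starRingEnd ℂ) (cz k v) • Zb k⁆
            = -∑ k, (starRingEnd ℂ) (cz k v) • ⁅Zb k, piW u⁆ := by
          rw [aux_lie_sum]
          rw [← Finset.sum_neg_distrib]
          apply Finset.sum_congr rfl; intro k _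
          rw [lie_smul, ← lie_skew, smul_neg]
        have hT4 : ⁅piW u, σ (piW v)⁆ = 0 :=
          hJabel _ (hWJ (piWmem u)) _ (hWbJ (hσVWVWb _ (piWmem v)))
        have hT2mem : ⁅zP u, σ (piW v)⁆ ∈ Submodule.span ℂ (Set.range Wb) :=
          hbrZspanWb (zP u) (hzPmem u) _ (hσVWVWb _ (piWmem v))
        have hsplit : ⁅u, σ v⁆
            = ((∑ k, (-(I/2) * (cz k u * (starRingEnd ℂ) (cz k v))) • Z k)
                + (-∑ k, (starRingEnd ℂ) (cz k v) • ⁅Zb k, piW u⁆))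
              + ((∑ k, (-(I/2) * (cz k u * (starRingEnd ℂ) (cz k v))) • Zb k)
                + ⁅zP u, σ (piW v)⁆) := by
          conv_lhs => rw [← hdec u hu, hσv]
          rw [add_lie, lie_add, lie_add, hT1, hT3, hT4, add_zero]
          abel
        have hwVmem : ((∑ k, (-(I/2) * (cz k u * (starRingEnd ℂ) (cz k v))) • Z k)
              + (-∑ k, (starRingEnd ℂ) (cz k v) • ⁅Zb k, piW u⁆)) ∈ V :=
          add_mem (Submodule.sum_mem _ fun k _ => Submodule.smul_mem _ _ (hZV k))
            (neg_mem (Submodule.sum_mem _ fun k _ =>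
              Submodule.smul_mem _ _ (hWle (hbrZbVW k _ (piWmem u)))))
        have hwσmem : ((∑ k, (-(I/2) * (cz k u * (starRingEnd ℂ) (cz k v))) • Zb k)
              + ⁅zP u, σ (piW v)⁆) ∈ Vb :=
          add_mem (Submodule.sum_mem _ fun k _ => Submodule.smul_mem _ _ (hZbVb k))
            (hWble hT2mem)
        have hJbr : Jmap ⁅u, σ v⁆
            = I • ((∑ k, (-(I/2) * (cz k u * (starRingEnd ℂ) (cz k v))) • Z k)
                + (-∑ k, (starRingEnd ℂ) (cz k v) • ⁅Zb k, piW u⁆))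
              - I • ((∑ k, (-(I/2) * (cz k u * (starRingEnd ℂ) (cz k v))) • Zb k)
                + ⁅zP u, σ (piW v)⁆) := by
          rw [hsplit]
          exact hJval _ _ hwVmem hwσmem
        rw [hJbr, map_sub, map_smul, map_smul, smul_eq_mul, smul_eq_mul,
          hωχV _ hwVmem, hωχVb _ hwσmem]
        have hII : ∀ x y : ℂ, I * -(I * x) - I * (I * y) = x + y := by
          intro x y
          have hI := Complex.I_mul_I
          linear_combination (-x - y) * hI
        rw [hII]
        have ehwV : h0 ((∑ k, (-(I/2) * (cz k u * (starRingEnd ℂ) (cz k v))) • Z k)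
              + (-∑ k, (starRingEnd ℂ) (cz k v) • ⁅Zb k, piW u⁆)) sη
            = (∑ k, (-(I/2) * (cz k u * (starRingEnd ℂ) (cz k v))) * h0 (Z k) sη)
              - ∑ k, (starRingEnd ℂ) (cz k v) * h0 ⁅Zb k, piW u⁆ sη := by
          simp only [map_add, map_neg, map_sum, map_smul, LinearMap.add_apply,
            LinearMap.neg_apply, LinearMap.sum_apply, LinearMap.smul_apply, smul_eq_mul]
          ring
        have eσwσ : σ ((∑ k, (-(I/2) * (cz k u * (starRingEnd ℂ) (cz k v))) • Zb k)
              + ⁅zP u, σ (piW v)⁆)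
            = (∑ k, (starRingEnd ℂ) (-(I/2) * (cz k u * (starRingEnd ℂ) (cz k v))) • Z k)
              + ∑ k, (starRingEnd ℂ) (cz k u) • ⁅Zb k, piW v⁆ := by
          rw [map_add, map_sum]
          congr 1
          · apply Finset.sum_congr rfl; intro k _
            rw [LinearMap.map_smulₛₗ, hσZb]
          · rw [hσbr, hσinv (piW v), hσzP, aux_sum_lie]
            apply Finset.sum_congr rfl; intro k _
            rw [smul_lie]
        have ehξ : h0 ξ (σ ((∑ k, (-(I/2) * (cz k u * (starRingEnd ℂ) (cz k v))) • Zb k)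
              + ⁅zP u, σ (piW v)⁆))
            = (∑ k, (-(I/2) * (cz k u * (starRingEnd ℂ) (cz k v))) * h0 ξ (Z k))
              + ∑ k, cz k u * h0 ξ ⁅Zb k, piW v⁆ := by
          rw [eσwσ]
          simp only [map_add, map_sum, LinearMap.map_smulₛₗ, smul_eq_mul, Complex.conj_conj]
        rw [ehwV, ehξ]
        simp only [mul_add, Finset.sum_add_distrib]
        ring
      -- linearity auxiliaries
      have hczlin : ∀ k (c : Fin n → ℂ), ∑ a, c a * cz k (Xf0 a) = cz k (∑ a, c a • Xf0 a) := by
        intro k c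
        rw [map_sum]
        apply Finset.sum_congr rfl; intro a _
        rw [map_smul, smul_eq_mul]
      have hlinF : ∀ k (c : Fin n → ℂ), ∑ a, c a * h0 ⁅Zb k, piW (Xf0 a)⁆ sη
          = h0 ⁅Zb k, piW (∑ a, c a • Xf0 a)⁆ sη := by
        intro k c
        rw [map_sum, aux_lie_sum, map_sum, LinearMap.sum_apply]
        apply Finset.sum_congr rfl; intro a _
        rw [map_smul, lie_smul, map_smul, LinearMap.smul_apply, smul_eq_mul]
      have hlinG : ∀ k (c : Fin n → ℂ), ∑ b, (starRingEnd ℂ) (c b) * h0 ξ ⁅Zb k, piW (Xf0 b)⁆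
          = h0 ξ ⁅Zb k, piW (∑ b, c b • Xf0 b)⁆ := by
        intro k c
        rw [map_sum, aux_lie_sum, map_sum]
        apply Finset.sum_congr rfl; intro b _
        rw [map_smul, lie_smul, LinearMap.map_smulₛₗ, smul_eq_mul]
      have hFZk : ∀ k, h0 ⁅Zb k, piW (Z k)⁆ sη = 0 := by
        intro k
        rw [piWZ, lie_zero, map_zero, LinearMap.zero_apply]
      have hGZk : ∀ k, h0 ξ ⁅Zb k, piW (Z k)⁆ = 0 := by
        intro k
        rw [piWZ, lie_zero, map_zero]
      -- the three double sums
      have hSig1 : ∑ a, ∑ b, (starRingEnd ℂ) (ginv0 a b) *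
            (∑ k, (-(I/2) * (cz k (Xf0 a) * (starRingEnd ℂ) (cz k (Xf0 b))))
              * (h0 (Z k) sη + h0 ξ (Z k)))
          = ∑ k, (-(I/2)) * (cz k ξ + (starRingEnd ℂ) (cz k sη)) := by
        calc ∑ a, ∑ b, (starRingEnd ℂ) (ginv0 a b) *
              (∑ k, (-(I/2) * (cz k (Xf0 a) * (starRingEnd ℂ) (cz k (Xf0 b))))
                * (h0 (Z k) sη + h0 ξ (Z k)))
            = ∑ k, ∑ a, (-(I/2)) * (h0 (Z k) sη + h0 ξ (Z k)) *
                (cz k (Xf0 a) * (∑ b, (starRingEnd ℂ) (ginv0 a b) * (starRingEnd ℂ) (cz k (Xf0 b)))) := by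
              simp only [Finset.mul_sum]
              rw [show ∀ (F : Fin n → Fin n → Fin r → ℂ), (∑ a, ∑ b, ∑ k, F a b k) = ∑ k, ∑ a, ∑ b, F a b k from ?_]
              · apply Finset.sum_congr rfl; intro k _
                apply Finset.sum_congr rfl; intro a _
                apply Finset.sum_congr rfl; intro b _
                ring
              · intro F
                calc ∑ a, ∑ b, ∑ k, F a b k = ∑ a, ∑ k, ∑ b, F a b k :=
                      Finset.sum_congr rfl (fun a _ => Finset.sum_comm)
                  _ = ∑ k, ∑ a, ∑ b, F a b k := Finset.sum_comm
          _ = ∑ k, (-(I/2)) * (h0 (Z k) sη + h0 ξ (Z k)) * ((A0 k : ℂ))⁻¹ := by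
              apply Finset.sum_congr rfl; intro k _
              have e : ∀ a, (∑ b, (starRingEnd ℂ) (ginv0 a b) * (starRingEnd ℂ) (cz k (Xf0 b)))
                  = zc k a * ((A0 k : ℂ))⁻¹ := K2 k
              calc ∑ a, (-(I/2)) * (h0 (Z k) sη + h0 ξ (Z k)) *
                    (cz k (Xf0 a) * (∑ b, (starRingEnd ℂ) (ginv0 a b) * (starRingEnd ℂ) (cz k (Xf0 b))))
                  = (-(I/2)) * (h0 (Z k) sη + h0 ξ (Z k)) * ((A0 k : ℂ))⁻¹
                      * (∑ a, zc k a * cz k (Xf0 a)) := by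
                    rw [Finset.mul_sum]
                    apply Finset.sum_congr rfl; intro a _
                    rw [e a]; ring
                _ = (-(I/2)) * (h0 (Z k) sη + h0 ξ (Z k)) * ((A0 k : ℂ))⁻¹ := by
                    rw [hczlin k, hzc k, czZkk, mul_one]
          _ = ∑ k, (-(I/2)) * (cz k ξ + (starRingEnd ℂ) (cz k sη)) := by
              apply Finset.sum_congr rfl; intro k _
              rw [hch2 sη hsηV k, hch1 ξ hξV k]
              have hk := hA0ne k
              field_simp
              ring
      have hSig2 : ∑ a, ∑ b, (starRingEnd ℂ) (ginv0 a b) *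
            (∑ k, (starRingEnd ℂ) (cz k (Xf0 b)) * h0 ⁅Zb k, piW (Xf0 a)⁆ sη) = 0 := by
        calc ∑ a, ∑ b, (starRingEnd ℂ) (ginv0 a b) *
              (∑ k, (starRingEnd ℂ) (cz k (Xf0 b)) * h0 ⁅Zb k, piW (Xf0 a)⁆ sη)
            = ∑ k, ∑ a, h0 ⁅Zb k, piW (Xf0 a)⁆ sη *
                (∑ b, (starRingEnd ℂ) (ginv0 a b) * (starRingEnd ℂ) (cz k (Xf0 b))) := by
              simp only [Finset.mul_sum]
              rw [show ∀ (F : Fin n → Fin n → Fin r → ℂ), (∑ a, ∑ b, ∑ k, F a b k) = ∑ k, ∑ a, ∑ b, F a b k from ?_]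
              · apply Finset.sum_congr rfl; intro k _
                apply Finset.sum_congr rfl; intro a _
                apply Finset.sum_congr rfl; intro b _
                ring
              · intro F
                calc ∑ a, ∑ b, ∑ k, F a b k = ∑ a, ∑ k, ∑ b, F a b k :=
                      Finset.sum_congr rfl (fun a _ => Finset.sum_comm)
                  _ = ∑ k, ∑ a, ∑ b, F a b k := Finset.sum_comm
          _ = 0 := by
              apply Finset.sum_eq_zero; intro k _
              calc ∑ a, h0 ⁅Zb k, piW (Xf0 a)⁆ sη *
                    (∑ b, (starRingEnd ℂ) (ginv0 a b) * (starRingEnd ℂ) (cz k (Xf0 b)))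
                  = ((A0 k : ℂ))⁻¹ * ∑ a, zc k a * h0 ⁅Zb k, piW (Xf0 a)⁆ sη := by
                    rw [Finset.mul_sum]
                    apply Finset.sum_congr rfl; intro a _
                    rw [K2 k a]; ring
                _ = 0 := by
                    rw [hlinF k, hzc k, hFZk k, mul_zero]
      have hSig3 : ∑ a, ∑ b, (starRingEnd ℂ) (ginv0 a b) *
            (∑ k, cz k (Xf0 a) * h0 ξ ⁅Zb k, piW (Xf0 b)⁆) = 0 := by
        calc ∑ a, ∑ b, (starRingEnd ℂ) (ginv0 a b) *
              (∑ k, cz k (Xf0 a) * h0 ξ ⁅Zb k, piW (Xf0 b)⁆)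
            = ∑ k, ∑ b, h0 ξ ⁅Zb k, piW (Xf0 b)⁆ *
                (∑ a, (starRingEnd ℂ) (ginv0 a b) * cz k (Xf0 a)) := by
              simp only [Finset.mul_sum]
              rw [show ∀ (F : Fin n → Fin n → Fin r → ℂ), (∑ a, ∑ b, ∑ k, F a b k) = ∑ k, ∑ b, ∑ a, F a b k from ?_]
              · apply Finset.sum_congr rfl; intro k _
                apply Finset.sum_congr rfl; intro b _
                apply Finset.sum_congr rfl; intro a _
                ring
              · intro F
                calc ∑ a, ∑ b, ∑ k, F a b k = ∑ a, ∑ k, ∑ b, F a b k :=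
                      Finset.sum_congr rfl (fun a _ => Finset.sum_comm)
                  _ = ∑ k, ∑ a, ∑ b, F a b k := Finset.sum_comm
                  _ = ∑ k, ∑ b, ∑ a, F a b k :=
                      Finset.sum_congr rfl (fun k _ => Finset.sum_comm)
          _ = 0 := by
              apply Finset.sum_eq_zero; intro k _
              calc ∑ b, h0 ξ ⁅Zb k, piW (Xf0 b)⁆ *
                    (∑ a, (starRingEnd ℂ) (ginv0 a b) * cz k (Xf0 a))
                  = ((A0 k : ℂ))⁻¹ * ∑ b, (starRingEnd ℂ) (zc k b) * h0 ξ ⁅Zb k, piW (Xf0 b)⁆ := by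
                    rw [Finset.mul_sum]
                    apply Finset.sum_congr rfl; intro b _
                    rw [K1 k b]; ring
                _ = 0 := by
                    rw [hlinG k, hzc k, hGZk k, mul_zero]
      calc ∑ a, ∑ b, (starRingEnd ℂ) (ginv0 a b) * ω0 ⁅X, Y⁆ (Jmap ⁅Xf0 a, σ (Xf0 b)⁆)
          = ∑ a, ∑ b, ((starRingEnd ℂ) (ginv0 a b) *
              (∑ k, (-(I/2) * (cz k (Xf0 a) * (starRingEnd ℂ) (cz k (Xf0 b))))
                * (h0 (Z k) sη + h0 ξ (Z k)))
            - (starRingEnd ℂ) (ginv0 a b) *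
              (∑ k, (starRingEnd ℂ) (cz k (Xf0 b)) * h0 ⁅Zb k, piW (Xf0 a)⁆ sη)
            + (starRingEnd ℂ) (ginv0 a b) *
              (∑ k, cz k (Xf0 a) * h0 ξ ⁅Zb k, piW (Xf0 b)⁆)) := by
            apply Finset.sum_congr rfl; intro a _
            apply Finset.sum_congr rfl; intro b _
            rw [hbrdec (Xf0 a) (hXf0V a) (Xf0 b) (hXf0V b)]
            ring
        _ = ∑ k, (-(I/2)) * (cz k ξ + (starRingEnd ℂ) (cz k sη)) := by
            simp only [Finset.sum_add_distrib, Finset.sum_sub_distrib]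
            rw [hSig1, hSig2, hSig3]
            ring
    have hsplitsum : (∑ a, ∑ b, ((starRingEnd ℂ) (ginv0 a b) * ω0 ⁅ξ, Xf0 a⁆ (σ (Xf0 b))
          + ginv0 a b * ω0 ⁅η, σ (Xf0 a)⁆ (Xf0 b)))
        = (∑ a, ∑ b, (starRingEnd ℂ) (ginv0 a b) * ω0 ⁅ξ, Xf0 a⁆ (σ (Xf0 b)))
          + (∑ a, ∑ b, ginv0 a b * ω0 ⁅η, σ (Xf0 a)⁆ (Xf0 b)) := by
      rw [← Finset.sum_add_distrib]
      apply Finset.sum_congr rfl; intro a _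
      rw [← Finset.sum_add_distrib]
    rw [hsplitsum, hS1, hS2, hS3]
    ring
  -- choose structure matrices for both bases and conclude
  have hXfV : ∀ a, Xf a ∈ V := fun a => by
    rw [← hXspan]; exact Submodule.subset_span ⟨a, rfl⟩
  have hXfV' : ∀ a, Xf' a ∈ V := fun a => by
    rw [← hXspan']; exact Submodule.subset_span ⟨a, rfl⟩
  have exmat : ∀ u ∈ V, ∀ (Xf0 : Fin n → L), Submodule.span ℂ (Set.range Xf0) = V →
      ∃ tt : Fin n → Fin n → ℂ, ∀ a, ⁅u, Xf0 a⁆ = ∑ c, tt a c • Xf0 c := by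
    intro u hu Xf0 hsp
    have hx : ∀ a : Fin n, ∃ c : Fin n → ℂ, ∑ i, c i • Xf0 i = ⁅u, Xf0 a⁆ := by
      intro a
      apply (Submodule.mem_span_range_iff_exists_fun ℂ).mp
      rw [hsp]
      exact hVV u hu (Xf0 a) (by rw [← hsp]; exact Submodule.subset_span ⟨a, rfl⟩)
    choose tt htt using hx
    exact ⟨tt, fun a => (htt a).symm⟩
  obtain ⟨t, ht⟩ := exmat ξ hξV Xf hXspan
  obtain ⟨t2, ht2⟩ := exmat sη hsηV Xf hXspan
  obtain ⟨t', ht'⟩ := exmat ξ hξV Xf' hXspan'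
  obtain ⟨t2', ht2'⟩ := exmat sη hsηV Xf' hXspan'
  have exP : ∃ P : Fin n → Fin n → ℂ, ∀ a, Xf' a = ∑ b, P a b • Xf b := by
    have hx : ∀ a : Fin n, ∃ c : Fin n → ℂ, ∑ i, c i • Xf i = Xf' a := fun a =>
      (Submodule.mem_span_range_iff_exists_fun ℂ).mp (by rw [hXspan]; exact hXfV' a)
    choose P hP using hx
    exact ⟨P, fun a => (hP a).symm⟩
  have exQ : ∃ Q : Fin n → Fin n → ℂ, ∀ a, Xf a = ∑ b, Q a b • Xf' b := by
    have hx : ∀ a : Fin n, ∃ c : Fin n → ℂ, ∑ i, c i • Xf' i = Xf a := fun a =>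
      (Submodule.mem_span_range_iff_exists_fun ℂ).mp (by rw [hXspan']; exact hXfV a)
    choose Q hQ using hx
    exact ⟨Q, fun a => (hQ a).symm⟩
  obtain ⟨P, hP⟩ := exP
  obtain ⟨Q, hQ⟩ := exQ
  have htr1 : ∑ a, t' a a = ∑ a, t a a := by
    apply aux_trace Xf Xf' hXind' P Q hP hQ ((LieAlgebra.ad ℂ L) ξ) t t'
    · intro a; rw [LieAlgebra.ad_apply]; exact ht a
    · intro a; rw [LieAlgebra.ad_apply]; exact ht' a
  have htr2 : ∑ a, t2' a a = ∑ a, t2 a a := by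
    apply aux_trace Xf Xf' hXind' P Q hP hQ ((LieAlgebra.ad ℂ L) sη) t2 t2'
    · intro a; rw [LieAlgebra.ad_apply]; exact ht2 a
    · intro a; rw [LieAlgebra.ad_apply]; exact ht2' a
  have e1 := main h ω Xf g ginv A t t2 hA hherm horth hdiag hωalt hω10 hω01 hωh
    hXspan hgmat hinv ht ht2
  have e2 := main h' ω' Xf' g' ginv' A' t' t2' hA' hherm' horth' hdiag' hωalt' hω10' hω01' hωh'
    hXspan' hgmat' hinv' ht' ht2'
  rw [hρ X Y, hρ' X Y, ← hξdef, ← hηdef, e1, e2, htr1, htr2]
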